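/- If four robots are placed on a ring of even size n at positions forming two axes of symmetry (i.e., positions p, p+a, p+n/2, p+n/2+a for some offset a), and all four robots execute the same deterministic rule based on identical views, then after any simultaneous activation the resulting configuration still has two axes of symmetry (the multiset of positions is invariant under the same two reflections). -/

import Mathlib

/-- Four robots on an even ring at positions `p, p+a, p+n/2, p+n/2+a` (two axes of
symmetry, reflections `x ↦ 2p+a-x` and `x ↦ 2p+a+n/2-x`).  All four have identical
views and move simultaneously to an adjacent node, symmetric robots moving in
symmetric directions (common offset `ε = ±1`, mirrored for reflected robots).
The resulting multiset of positions is still invariant under the same two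
reflections. -/
theorem stmt0 (n : ℕ) (hn : 2 * (n / 2) = n) (p a ε : ZMod n)
    (hε : ε = 1 ∨ ε = -1) :
    let h : ZMod n := ((n / 2 : ℕ) : ZMod n)
    let M' : Multiset (ZMod n) := {p + ε, p + a - ε, p + h + ε, p + h + a - ε}
    Multiset.map (fun x => (2 * p + a) - x) M' = M' ∧
    Multiset.map (fun x => (2 * p + a + ((n / 2 : ℕ) : ZMod n)) - x) M' = M' := by
  intro h M'
  have hh : h + h = 0 := by
    have : ((2 * (n / 2) : ℕ) : ZMod n) = ((n : ℕ) : ZMod n) := by rw [hn]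
    simpa [h, two_mul] using this.trans (ZMod.natCast_self n)
  have h1 : 2 * p + a - (p + ε) = p + a - ε := by ring
  have h2 : 2 * p + a - (p + a - ε) = p + ε := by ring
  have h3 : 2 * p + a - (p + h + ε) = p + h + a - ε := by linear_combination -hh
  have h4 : 2 * p + a - (p + h + a - ε) = p + h + ε := by linear_combination -hh
  have g1 : 2 * p + a + h - (p + ε) = p + h + a - ε := by ring
  have g2 : 2 * p + a + h - (p + a - ε) = p + h + ε := by ring
  have g3 : 2 * p + a + h - (p + h + ε) = p + a - ε := by ring
  have g4 : 2 * p + a + h - (p + h + a - ε) = p + ε := by ring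
  constructor
  · show Multiset.map _ ({p + ε, p + a - ε, p + h + ε, p + h + a - ε} : Multiset (ZMod n)) = _
    simp only [Multiset.insert_eq_cons, Multiset.map_cons, Multiset.map_singleton, h1, h2, h3, h4]
    refine (Multiset.cons_swap _ _ _).trans ?_
    congr 2
    exact Multiset.cons_swap _ _ _
  · show Multiset.map _ ({p + ε, p + a - ε, p + h + ε, p + h + a - ε} : Multiset (ZMod n)) = _
    rw [show ((n / 2 : ℕ) : ZMod n) = h from rfl]
    simp only [Multiset.insert_eq_cons, Multiset.map_cons, Multiset.map_singleton, g1, g2, g3, g4]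
    -- goal: {p+h+a-ε, p+h+ε, p+a-ε, p+ε} = {p+ε, p+a-ε, p+h+ε, p+h+a-ε}
    have key : ((p+h+a-ε) ::ₘ (p+h+ε) ::ₘ (p+a-ε) ::ₘ {p+ε} : Multiset (ZMod n))
        = (([p+ε, p+a-ε, p+h+ε, p+h+a-ε].reverse : List (ZMod n)) : Multiset (ZMod n)) := by
      rfl
    rw [key, Multiset.coe_reverse]
    rfl
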